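/- Assume the saddle-point assumption. Let x ∈ ℝⁿ, λ ∈ ℝᵐ with λ ≥ 0, ν ∈ ℝˡ, and choose g₀ ∈ ∂f₀(x) and gᵢ ∈ ∂Fᵢ(x) for i = 1,…,m; set G_x := g₀ + Σᵢ λᵢ gᵢ + Aᵀν. Then 0 ≤ ⟨G_x, x − x*⟩ − ⟨F(x), λ − λ*⟩ − ⟨A x − b, ν − ν*⟩. -/

import Mathlib

open scoped RealInnerProductSpace
open Matrix

/-- `A x` for `A` an `l × n` real matrix and `x ∈ ℝⁿ`, as Euclidean spaces. -/
noncomputable def mulVecE {l n : ℕ} (A : Matrix (Fin l) (Fin n) ℝ)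
    (x : EuclideanSpace ℝ (Fin n)) : EuclideanSpace ℝ (Fin l) :=
  Matrix.toEuclideanLin A x

/-- `F(x) = (max{f₁(x),0}, …, max{f_m(x),0})`. -/
noncomputable def Fplus {n m : ℕ} (f : Fin m → EuclideanSpace ℝ (Fin n) → ℝ)
    (x : EuclideanSpace ℝ (Fin n)) : EuclideanSpace ℝ (Fin m) :=
  (WithLp.equiv 2 (Fin m → ℝ)).symm fun i => max (f i x) 0

/-- The Lagrangian `L(x, λ, ν) = f₀(x) + λᵀF(x) + νᵀ(Ax - b)`. -/
noncomputable def Lag {n m l : ℕ} (f0 : EuclideanSpace ℝ (Fin n) → ℝ)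
    (f : Fin m → EuclideanSpace ℝ (Fin n) → ℝ)
    (A : Matrix (Fin l) (Fin n) ℝ) (b : EuclideanSpace ℝ (Fin l))
    (x : EuclideanSpace ℝ (Fin n)) (lam : EuclideanSpace ℝ (Fin m))
    (nu : EuclideanSpace ℝ (Fin l)) : ℝ :=
  f0 x + ⟪lam, Fplus f x⟫ + ⟪nu, mulVecE A x - b⟫

/-- Under the saddle-point assumption, for any `x`, `λ ≥ 0`, `ν`, any subgradients
`g₀ ∈ ∂f₀(x)`, `gᵢ ∈ ∂Fᵢ(x)`, and `G_x = g₀ + Σᵢ λᵢ gᵢ + Aᵀν`, one has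
`0 ≤ ⟨G_x, x - x*⟩ - ⟨F(x), λ - λ*⟩ - ⟨Ax - b, ν - ν*⟩`. -/
theorem saddle_monotonicity
    (n m l : ℕ)
    (f0 : EuclideanSpace ℝ (Fin n) → ℝ)
    (f : Fin m → EuclideanSpace ℝ (Fin n) → ℝ)
    (hf0 : ConvexOn ℝ Set.univ f0)
    (hf : ∀ i, ConvexOn ℝ Set.univ (f i))
    (A : Matrix (Fin l) (Fin n) ℝ) (b : EuclideanSpace ℝ (Fin l))
    (pstar : ℝ)
    (xstar : EuclideanSpace ℝ (Fin n))
    (lamstar : EuclideanSpace ℝ (Fin m)) (nustar : EuclideanSpace ℝ (Fin l))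
    -- x* is primal optimal with value p*
    (hxfeas : ∀ i, f i xstar ≤ 0) (hxeq : mulVecE A xstar = b)
    (hxval : f0 xstar = pstar)
    -- saddle-point assumption
    (hlamstar : ∀ i, 0 ≤ lamstar i)
    (hsaddle_eq : Lag f0 f A b xstar lamstar nustar = pstar)
    (hsaddle1 : ∀ (lam : EuclideanSpace ℝ (Fin m)) (nu : EuclideanSpace ℝ (Fin l)),
      (∀ i, 0 ≤ lam i) → Lag f0 f A b xstar lam nu ≤ pstar)
    (hsaddle2 : ∀ x, pstar ≤ Lag f0 f A b x lamstar nustar)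
    -- the point and the subgradients
    (x : EuclideanSpace ℝ (Fin n))
    (lam : EuclideanSpace ℝ (Fin m)) (nu : EuclideanSpace ℝ (Fin l))
    (hlam : ∀ i, 0 ≤ lam i)
    (g0 : EuclideanSpace ℝ (Fin n))
    (hg0 : ∀ y, ⟪g0, y - x⟫ ≤ f0 y - f0 x)
    (g : Fin m → EuclideanSpace ℝ (Fin n))
    (hg : ∀ i y, ⟪g i, y - x⟫ ≤ max (f i y) 0 - max (f i x) 0) :
    0 ≤ ⟪g0 + (∑ i, lam i • g i) + mulVecE Aᵀ nu, x - xstar⟫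
        - ⟪Fplus f x, lam - lamstar⟫ - ⟪mulVecE A x - b, nu - nustar⟫ := by
  -- abbreviations
  set S : EuclideanSpace ℝ (Fin n) := ∑ i, lam i • g i with hS
  have adj : ∀ (v : EuclideanSpace ℝ (Fin l)) (z : EuclideanSpace ℝ (Fin n)),
      ⟪mulVecE Aᵀ v, z⟫ = ⟪v, mulVecE A z⟫ := by
    intro v z
    simp only [mulVecE, Matrix.toEuclideanLin_apply, PiLp.inner_apply, RCLike.inner_apply,
      conj_trivial, Matrix.mulVec, dotProduct, Matrix.transpose_apply,
      Finset.sum_mul, Finset.mul_sum]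
    rw [Finset.sum_comm]
    apply Finset.sum_congr rfl; intros; apply Finset.sum_congr rfl; intros; ring
  have key1 : ⟪g0, xstar - x⟫ ≤ f0 xstar - f0 x := hg0 xstar
  have hinlam : ∀ (w : EuclideanSpace ℝ (Fin m)), ⟪w, Fplus f x⟫ = ∑ i, w i * max (f i x) 0 := by
    intro w
    simp [Fplus, PiLp.inner_apply, RCLike.inner_apply, mul_comm]
  have key2 : ⟪S, xstar - x⟫ ≤ -⟪lam, Fplus f x⟫ := by
    rw [hS, sum_inner, hinlam]
    have : ∀ i ∈ Finset.univ, ⟪lam i • g i, xstar - x⟫ ≤ lam i * (-(max (f i x) 0)) := by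
      intro i _
      rw [real_inner_smul_left]
      have h := hg i xstar
      have h0 : max (f i xstar) 0 = 0 := max_eq_right (hxfeas i)
      rw [h0] at h
      have := mul_le_mul_of_nonneg_left (by linarith : ⟪g i, xstar - x⟫ ≤ -(max (f i x) 0)) (hlam i)
      linarith
    calc (∑ i, ⟪lam i • g i, xstar - x⟫) ≤ ∑ i, lam i * (-(max (f i x) 0)) :=
          Finset.sum_le_sum this
      _ = -∑ i, lam i * max (f i x) 0 := by simp [Finset.sum_neg_distrib, mul_neg]
  have hlinA : mulVecE A (xstar - x) = mulVecE A xstar - mulVecE A x := by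
    simp [mulVecE, map_sub]
  have key3 : ⟪mulVecE Aᵀ nu, xstar - x⟫ = -⟪nu, mulVecE A x - b⟫ := by
    rw [adj, hlinA, hxeq, ← inner_neg_right]
    congr 1
    abel
  have key4 : pstar ≤ f0 x + ⟪lamstar, Fplus f x⟫ + ⟪nustar, mulVecE A x - b⟫ := hsaddle2 x
  -- expand the goal
  have e1 : ⟪g0 + S + mulVecE Aᵀ nu, x - xstar⟫
      = -(⟪g0, xstar - x⟫ + ⟪S, xstar - x⟫ + ⟪mulVecE Aᵀ nu, xstar - x⟫) := by
    have : x - xstar = -(xstar - x) := by abel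
    rw [this, inner_neg_right, inner_add_left, inner_add_left]
  have e2 : ⟪Fplus f x, lam - lamstar⟫ = ⟪lam, Fplus f x⟫ - ⟪lamstar, Fplus f x⟫ := by
    rw [real_inner_comm, inner_sub_left]
  have e3 : ⟪mulVecE A x - b, nu - nustar⟫
      = ⟪nu, mulVecE A x - b⟫ - ⟪nustar, mulVecE A x - b⟫ := by
    rw [real_inner_comm, inner_sub_left]
  rw [e1, e2, e3]
  linarith
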